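/- With 𝓙ₒ[f](X) := ∫₀^X e^{-is-qπ} s^{p+1} f(s) ds and C̃ⱼ as above, the integral identity 𝓙ₒ[C̃₁^{(p,2q,2)}](X) + p(p+2)·𝓙ₒ[C̃₀^{(p,2q,2)}](X) = p·X·(d/dX)𝓙ₒ[C̃₀^{(p,2q,2)}](X) = p·e^{-iX-qπ} X^{p+2} C̃₀^{(p,2q,2)}(X) holds for all X ≥ 0. -/

import Mathlib

open Complex intervalIntegral
open scoped Real

/-- Rising factorial (Pochhammer symbol) for a complex argument. -/
noncomputable def poch (x : ℂ) (n : ℕ) : ℂ := ∏ i ∈ Finset.range n, (x + i)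

lemma poch_succ (x : ℂ) (n : ℕ) : poch x (n+1) = poch x n * (x + n) := by
  simp [poch, Finset.prod_range_succ]

lemma add_nat_ne_zero {x : ℂ} (hx : 0 < x.re) (n : ℕ) : x + n ≠ 0 := by
  intro h
  have : (x + n).re = 0 := by rw [h]; simp
  simp only [Complex.add_re, Complex.natCast_re] at this
  have h2 : (0:ℝ) ≤ (n:ℝ) := by positivity
  linarith

lemma poch_ne_zero {x : ℂ} (hx : 0 < x.re) (n : ℕ) : poch x n ≠ 0 :=
  Finset.prod_ne_zero_iff.mpr fun i _ => add_nat_ne_zero hx i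

noncomputable def hgcoef (a b : ℂ) : ℕ → ℂ := fun n => poch a n / (poch b n * (n.factorial : ℂ))

lemma hgcoef_ne_zero {a b : ℂ} (ha : 0 < a.re) (hb : 0 < b.re) (n : ℕ) : hgcoef a b n ≠ 0 := by
  apply div_ne_zero (poch_ne_zero ha n)
  exact mul_ne_zero (poch_ne_zero hb n) (Nat.cast_ne_zero.mpr n.factorial_ne_zero)

lemma hgcoef_radius {a b : ℂ} (ha : 0 < a.re) (hb : 0 < b.re) :
    (FormalMultilinearSeries.ofScalars ℂ (hgcoef a b)).radius = ⊤ := by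
  apply FormalMultilinearSeries.ofScalars_radius_eq_top_of_tendsto
  · exact Filter.Eventually.of_forall (hgcoef_ne_zero ha hb)
  · have hratio : ∀ n : ℕ, hgcoef a b (n+1) / hgcoef a b n
        = ((a + n) / ((n:ℂ)+1)) * (b + n)⁻¹ := by
      intro n
      have hb' := poch_ne_zero hb n
      have ha' := poch_ne_zero ha n
      have hbn := add_nat_ne_zero hb n
      have hf : ((n.factorial : ℕ) : ℂ) ≠ 0 := Nat.cast_ne_zero.mpr n.factorial_ne_zero
      have hn1 : ((n:ℂ)+1) ≠ 0 := by
        intro h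
        have : ((n:ℂ)+1).re = 0 := by rw [h]; simp
        simp only [Complex.add_re, Complex.natCast_re, Complex.one_re] at this
        have h2 : (0:ℝ) ≤ (n:ℝ) := by positivity
        linarith
      simp only [hgcoef]
      rw [poch_succ, poch_succ, Nat.factorial_succ]
      push_cast
      field_simp
    have h1 : Filter.Tendsto (fun n : ℕ => (a + n) / ((n:ℂ)+1)) Filter.atTop (nhds 1) := by
      have : ∀ n : ℕ, (a + n) / ((n:ℂ)+1) = 1 + (a - 1) * ((n:ℂ)+1)⁻¹ := by
        intro n
        have hn1 : ((n:ℂ)+1) ≠ 0 := by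
          intro h
          have : ((n:ℂ)+1).re = 0 := by rw [h]; simp
          simp only [Complex.add_re, Complex.natCast_re, Complex.one_re] at this
          have h2 : (0:ℝ) ≤ (n:ℝ) := by positivity
          linarith
        field_simp
        ring
      simp_rw [this]
      have hz : Filter.Tendsto (fun n : ℕ => ((n:ℂ)+1)⁻¹) Filter.atTop (nhds 0) := by
        rw [tendsto_zero_iff_norm_tendsto_zero]
        have : ∀ n : ℕ, ‖((n:ℂ)+1)⁻¹‖ = ((n:ℝ)+1)⁻¹ := by
          intro n
          rw [norm_inv]
          congr 1
          have : ((n:ℂ)+1) = (((n:ℝ)+1 : ℝ) : ℂ) := by push_cast; ring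
          rw [this, Complex.norm_real, Real.norm_eq_abs, abs_of_pos (by positivity)]
        simp_rw [this]
        simpa [one_div] using tendsto_one_div_add_atTop_nhds_zero_nat (𝕜 := ℝ)
      have := ((hz.const_mul (a - 1)).const_add 1)
      simpa using this
    have h2 : Filter.Tendsto (fun n : ℕ => ‖b + (n:ℂ)‖⁻¹) Filter.atTop (nhds 0) := by
      apply Filter.Tendsto.inv_tendsto_atTop
      apply Filter.tendsto_atTop_mono (f := fun n : ℕ => b.re + n)
      · intro n
        calc b.re + n = (b + n).re := by simp
        _ ≤ ‖b + (n:ℂ)‖ := Complex.re_le_norm _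
      · exact Filter.tendsto_atTop_add_const_left _ _ (tendsto_natCast_atTop_atTop)
    have := (h1.norm.mul h2)
    simp only [norm_one, one_mul] at this
    convert this using 2 with n
    rw [← norm_inv, ← norm_mul, ← hratio n, norm_div]

/-- Kummer confluent hypergeometric series. -/
noncomputable def oneF1 (a c z : ℂ) : ℂ :=
  ∑' n : ℕ, poch a n / (poch c n * (n.factorial : ℂ)) * z ^ n

noncomputable def hgfun (a b : ℂ) : ℂ → ℂ :=
  FormalMultilinearSeries.ofScalarsSum (hgcoef a b)

lemma oneF1_eq_hgfun (a b z : ℂ) : oneF1 a b z = hgfun a b z := by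
  simp [oneF1, hgfun, FormalMultilinearSeries.ofScalars_sum_eq, smul_eq_mul, hgcoef]

lemma hgfun_analytic {a b : ℂ} (ha : 0 < a.re) (hb : 0 < b.re) :
    AnalyticOnNhd ℂ (hgfun a b) Set.univ := by
  intro z _
  have h0 : (0:ENNReal) < (FormalMultilinearSeries.ofScalars ℂ (hgcoef a b)).radius := by
    rw [hgcoef_radius ha hb]; exact ENNReal.zero_lt_top
  have hball := (FormalMultilinearSeries.ofScalars ℂ (hgcoef a b)).hasFPowerSeriesOnBall h0
  apply hball.analyticAt_of_mem
  rw [hgcoef_radius ha hb]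
  simp

lemma hgfun_deriv_analytic {a b : ℂ} (ha : 0 < a.re) (hb : 0 < b.re) :
    AnalyticOnNhd ℂ (deriv (hgfun a b)) Set.univ :=
  (hgfun_analytic ha hb).deriv

/-- `C̃₀^{(p,2q,2)}(X) = ₁F₁(p+2-2iq; 2p+4; 2iX)`. -/
noncomputable def C0 (p q : ℝ) (X : ℝ) : ℂ :=
  oneF1 ((p : ℂ) + 2 - 2 * q * I) (2 * p + 4) (2 * I * X)

/-- `C̃₁^{(p,2q,2)}(X) = -ipX C̃₀^{(p,2q,2)}(X) + pX (d/dX) C̃₀^{(p,2q,2)}(X)`. -/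
noncomputable def C1 (p q : ℝ) (X : ℝ) : ℂ :=
  -I * p * X * C0 p q X + p * X * deriv (fun Y : ℝ => C0 p q Y) X

/-- The integral operator `𝓙ₒ[f](X) = ∫₀^X e^{-is-qπ} s^{p+1} f(s) ds`. -/
noncomputable def Jo (p q : ℝ) (f : ℝ → ℂ) (X : ℝ) : ℂ :=
  ∫ s in (0 : ℝ)..X, Complex.exp (-I * s - q * π) * ((s ^ (p + 1) : ℝ) : ℂ) * f s

section main
variable {p q : ℝ} (hp : -2 < p)
include hp

lemma ha' : 0 < ((p : ℂ) + 2 - 2 * q * I).re := by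
  simp [Complex.sub_re, Complex.add_re]
  linarith

lemma hb' : 0 < ((2 * (p:ℂ) + 4)).re := by
  simp
  linarith

omit hp in lemma C0_eq (X : ℝ) :
    C0 p q X = hgfun ((p : ℂ) + 2 - 2 * q * I) (2 * p + 4) (2 * I * X) := by
  rw [C0, oneF1_eq_hgfun]

lemma hasDerivAt_C0 (X : ℝ) :
    HasDerivAt (C0 p q)
      (2 * I * deriv (hgfun ((p:ℂ) + 2 - 2*q*I) (2*p+4)) (2 * I * X)) X := by
  set a := (p:ℂ) + 2 - 2*q*I
  set b := (2*(p:ℂ)+4)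
  have hF : HasDerivAt (hgfun a b) (deriv (hgfun a b) (2*I*X)) (2*I*X) :=
    ((hgfun_analytic (ha' hp) (hb' hp) _ trivial).differentiableAt).hasDerivAt
  have hg : HasDerivAt (fun Y : ℝ => 2*I*(Y:ℂ)) (2*I) X := by
    have h1 : HasDerivAt (fun Y : ℝ => ((Y:ℝ):ℂ)) 1 X := by
      simpa using (hasDerivAt_id X).ofReal_comp
    simpa using h1.const_mul (2*I)
  have := hF.comp X hg
  have heq : (fun Y : ℝ => hgfun a b (2*I*Y)) = C0 p q := by
    funext Y; rw [C0_eq]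
  rw [show (hgfun a b) ∘ (fun Y : ℝ => 2*I*(Y:ℂ)) = C0 p q from heq] at this
  convert this using 1
  · rfl
  ring

lemma deriv_C0_eq (X : ℝ) :
    deriv (fun Y : ℝ => C0 p q Y) X
      = 2 * I * deriv (hgfun ((p:ℂ) + 2 - 2*q*I) (2*p+4)) (2 * I * X) :=
  (hasDerivAt_C0 hp X).deriv

lemma continuous_C0 : Continuous (C0 p q) := by
  have : Continuous (hgfun ((p:ℂ) + 2 - 2*q*I) (2*p+4)) := by
    rw [← continuousOn_univ]
    exact (hgfun_analytic (ha' hp) (hb' hp)).continuousOn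
  have h2 : Continuous (fun Y : ℝ => 2*I*(Y:ℂ)) := by continuity
  have := this.comp h2
  convert this using 1
  funext Y; rw [C0_eq]; rfl

lemma continuous_deriv_C0 : Continuous (fun X : ℝ => deriv (fun Y : ℝ => C0 p q Y) X) := by
  have hd : Continuous (deriv (hgfun ((p:ℂ) + 2 - 2*q*I) (2*p+4))) := by
    rw [← continuousOn_univ]
    exact (hgfun_deriv_analytic (ha' hp) (hb' hp)).continuousOn
  have h2 : Continuous (fun Y : ℝ => 2*I*(Y:ℂ)) := by continuity
  have h3 : Continuous (fun X : ℝ =>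
      2*I* deriv (hgfun ((p:ℂ) + 2 - 2*q*I) (2*p+4)) (2*I*(X:ℂ))) :=
    continuous_const.mul (hd.comp h2)
  simp_rw [deriv_C0_eq hp]
  exact h3

lemma continuous_C1 : Continuous (C1 p q) := by
  unfold C1
  apply Continuous.add
  · apply Continuous.mul _ (continuous_C0 hp)
    continuity
  · apply Continuous.mul _ (continuous_deriv_C0 hp)
    continuity

omit hp in lemma normE (s : ℝ) : ‖Complex.exp (-I * s - q * π)‖ = Real.exp (-(q * π)) := by
  rw [Complex.norm_exp]
  congr 1
  simp

omit hp in lemma measurable_integrand {k : ℝ → ℂ} (hk : Continuous k) :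
    Measurable (fun s : ℝ =>
      Complex.exp (-I * s - q * π) * ((s ^ (p + 1) : ℝ) : ℂ) * k s) := by
  apply Measurable.mul _ hk.measurable
  apply Measurable.mul
  · exact (Complex.continuous_exp.comp (by continuity)).measurable
  · exact Complex.measurable_ofReal.comp (measurable_id'.pow_const _)

lemma integrable_aux {X : ℝ} (hX : 0 ≤ X) {k : ℝ → ℂ} (hk : Continuous k) :
    IntervalIntegrable (fun s : ℝ =>
        Complex.exp (-I * s - q * π) * ((s ^ (p + 1) : ℝ) : ℂ) * k s)
      MeasureTheory.volume 0 X := by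
  obtain ⟨M, hM⟩ := (isCompact_Icc (a := (0:ℝ)) (b := X)).exists_bound_of_continuousOn
    hk.continuousOn
  have hM0 : 0 ≤ M := le_trans (norm_nonneg (k 0)) (hM 0 ⟨le_refl _, hX⟩)
  have hdom : IntervalIntegrable
      (fun s : ℝ => (Real.exp (-(q*π)) * M) * s ^ (p+1)) MeasureTheory.volume 0 X :=
    (intervalIntegral.intervalIntegrable_rpow' (by linarith)).const_mul _
  apply hdom.mono_fun ((measurable_integrand hk).aestronglyMeasurable)
  filter_upwards [MeasureTheory.ae_restrict_mem measurableSet_uIoc] with s hs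
  rw [Set.uIoc_of_le hX] at hs
  obtain ⟨hs0, hsX⟩ := hs
  have hsp : (0:ℝ) ≤ s ^ (p+1) := Real.rpow_nonneg hs0.le _
  rw [norm_mul, norm_mul, normE, Complex.norm_real, Real.norm_eq_abs,
    _root_.abs_of_nonneg hsp, Real.norm_eq_abs,
    _root_.abs_of_nonneg (by positivity : (0:ℝ) ≤ Real.exp (-(q*π)) * M * s ^ (p+1))]
  have := hM s ⟨hs0.le, hsX⟩
  calc Real.exp (-(q*π)) * s ^ (p+1) * ‖k s‖
      ≤ Real.exp (-(q*π)) * s ^ (p+1) * M := by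
        apply mul_le_mul_of_nonneg_left this (by positivity)
    _ = Real.exp (-(q*π)) * M * s ^ (p+1) := by ring

lemma hasDerivAt_Jo {X : ℝ} (hX : 0 < X) :
    HasDerivAt (fun Y : ℝ => Jo p q (C0 p q) Y)
      (Complex.exp (-I * X - q * π) * ((X ^ (p + 1) : ℝ) : ℂ) * C0 p q X) X := by
  unfold Jo
  apply intervalIntegral.integral_hasDerivAt_right
  · exact integrable_aux hp hX.le (continuous_C0 hp)
  · exact ((measurable_integrand (p := p) (q := q)
      (continuous_C0 hp)).aestronglyMeasurable).stronglyMeasurableAtFilter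
  · apply ContinuousAt.mul _ (continuous_C0 hp).continuousAt
    apply ContinuousAt.mul
    · exact (Complex.continuous_exp.comp (by continuity)).continuousAt
    · exact Complex.continuous_ofReal.continuousAt.comp
        (Real.continuousAt_rpow_const X _ (Or.inl hX.ne'))

omit hp in lemma hasDerivAt_E (s : ℝ) :
    HasDerivAt (fun t : ℝ => Complex.exp (-I * t - q * π))
      (-I * Complex.exp (-I * s - q * π)) s := by
  have h1 : HasDerivAt (fun t : ℝ => ((t : ℝ) : ℂ)) 1 s := by
    simpa using (hasDerivAt_id s).ofReal_comp
  have h2 : HasDerivAt (fun t : ℝ => -I * (t:ℂ) - q * π) (-I) s := by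
    simpa using (h1.const_mul (-I)).sub_const ((q:ℂ) * π)
  have h3 := (Complex.hasDerivAt_exp (-I * (s:ℂ) - q * π)).comp s h2
  convert h3 using 1
  · rfl
  · rfl
  ring

lemma hasDerivAt_G {s : ℝ} (hs : 0 < s) :
    HasDerivAt (fun t : ℝ =>
        (p:ℂ) * Complex.exp (-I * t - q * π) * ((t ^ (p + 2) : ℝ) : ℂ) * C0 p q t)
      (Complex.exp (-I * s - q * π) * ((s ^ (p + 1) : ℝ) : ℂ)
        * (C1 p q s + p * (p + 2) * C0 p q s)) s := by
  have hE := hasDerivAt_E (q := q) s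
  have hr0 : HasDerivAt (fun t : ℝ => t ^ (p+2)) ((p+2) * s ^ (p+1)) s := by
    have h := Real.hasDerivAt_rpow_const (x := s) (p := p+2) (Or.inl hs.ne')
    have h21 : p + 2 - 1 = p + 1 := by ring
    rwa [h21] at h
  have hr : HasDerivAt (fun t : ℝ => ((t ^ (p+2) : ℝ) : ℂ))
      ((((p+2) * s ^ (p+1) : ℝ)) : ℂ) s := hr0.ofReal_comp
  have hc' : HasDerivAt (C0 p q) (deriv (fun Y : ℝ => C0 p q Y) s) s := by
    have h := hasDerivAt_C0 (q := q) hp s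
    rwa [← deriv_C0_eq (q := q) hp s] at h
  have hprod := ((hE.const_mul (p:ℂ)).mul hr).mul hc'
  convert hprod using 1
  · rfl
  · rfl
  have hpow : ((s ^ (p+2) : ℝ) : ℂ) = ((s ^ (p+1) : ℝ) : ℂ) * s := by
    have : s ^ (p+2) = s ^ (p+1) * s := by
      have := Real.rpow_add_one hs.ne' (p+1)
      rw [show p + 1 + 1 = p + 2 by ring] at this
      exact this
    rw [this]
    push_cast
    ring
  simp only [Pi.mul_apply]
  rw [C1, hpow]
  push_cast
  ring

lemma G_cont : Continuous (fun t : ℝ =>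
    (p:ℂ) * Complex.exp (-I * t - q * π) * ((t ^ (p + 2) : ℝ) : ℂ) * C0 p q t) := by
  have hrc : Continuous fun s : ℝ => (s ^ (p+2) : ℝ) :=
    continuous_iff_continuousAt.mpr
      (fun x => Real.continuousAt_rpow_const x _ (Or.inr (by linarith)))
  have contE : Continuous fun t : ℝ => Complex.exp (-I * t - q * π) :=
    Complex.continuous_exp.comp (by continuity)
  exact ((continuous_const.mul contE).mul
    (Complex.continuous_ofReal.comp hrc)).mul (continuous_C0 hp)

end main

/-- The integral identity
`𝓙ₒ[C̃₁](X) + p(p+2) 𝓙ₒ[C̃₀](X) = pX (d/dX)𝓙ₒ[C̃₀](X) = p e^{-iX-qπ} X^{p+2} C̃₀(X)`. -/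
theorem Jo_identity (p q : ℝ) (hp : -2 < p) (X : ℝ) (hX : 0 ≤ X) :
    Jo p q (C1 p q) X + p * (p + 2) * Jo p q (C0 p q) X
        = p * X * deriv (fun Y : ℝ => Jo p q (C0 p q) Y) X
      ∧ p * X * deriv (fun Y : ℝ => Jo p q (C0 p q) Y) X
        = p * Complex.exp (-I * X - q * π) * ((X ^ (p + 2) : ℝ) : ℂ) * C0 p q X := by
  rcases eq_or_lt_of_le hX with h0 | hXpos
  · subst h0
    have hz : ((0:ℝ) ^ (p+2) : ℝ) = 0 := Real.zero_rpow (by linarith)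
    constructor
    · simp [Jo]
    · simp [hz]
  · have hJd : deriv (fun Y : ℝ => Jo p q (C0 p q) Y) X
        = Complex.exp (-I * X - q * π) * ((X ^ (p + 1) : ℝ) : ℂ) * C0 p q X :=
      (hasDerivAt_Jo hp hXpos).deriv
    have hpow : ((X ^ (p+2) : ℝ) : ℂ) = ((X ^ (p+1) : ℝ) : ℂ) * X := by
      have h : X ^ (p+2) = X ^ (p+1) * X := by
        have := Real.rpow_add_one hXpos.ne' (p+1)
        rwa [show p + 1 + 1 = p + 2 by ring] at this
      rw [h]; push_cast; ring
    have second : (p:ℂ) * X * deriv (fun Y : ℝ => Jo p q (C0 p q) Y) X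
        = p * Complex.exp (-I * X - q * π) * ((X ^ (p + 2) : ℝ) : ℂ) * C0 p q X := by
      rw [hJd, hpow]; push_cast; ring
    refine ⟨?_, second⟩
    rw [second]
    have hint1 := integrable_aux (q := q) hp hX (continuous_C1 (q := q) hp)
    have hint0 := integrable_aux (q := q) hp hX (continuous_C0 (q := q) hp)
    have hcomb : Jo p q (C1 p q) X + (p:ℂ) * ((p:ℂ) + 2) * Jo p q (C0 p q) X
        = ∫ s in (0:ℝ)..X, Complex.exp (-I * s - q * π) * ((s ^ (p+1) : ℝ) : ℂ)
            * (C1 p q s + (p:ℂ) * ((p:ℂ) + 2) * C0 p q s) := by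
      rw [Jo, Jo, ← intervalIntegral.integral_const_mul,
        ← intervalIntegral.integral_add hint1 (hint0.const_mul _)]
      apply intervalIntegral.integral_congr
      intro s _
      simp only
      ring
    rw [hcomb]
    have hk : Continuous (fun s : ℝ => C1 p q s + (p:ℂ) * ((p:ℂ) + 2) * C0 p q s) :=
      (continuous_C1 (q := q) hp).add (continuous_const.mul (continuous_C0 (q := q) hp))
    have hFTC := intervalIntegral.integral_eq_sub_of_hasDeriv_right_of_le hX
      (G_cont (q := q) hp).continuousOn
      (fun x hx => (hasDerivAt_G hp hx.1).hasDerivWithinAt)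
      (integrable_aux (q := q) hp hX hk)
    rw [hFTC]
    have hz : ((0:ℝ) ^ (p+2) : ℝ) = 0 := Real.zero_rpow (by linarith)
    simp [hz]
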